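/- arXiv:math/0109105 — 2 statements merged into one kernel-verified Lean document; each statement's English description precedes it below -/
import Mathlib

section
/- The Lusternik–Schnirelmann category of a product satisfies cat(A × B) ≤ cat(A) + cat(B) for path-connected spaces A and B having the homotopy type of CW-complexes. -/
/-- A subset `U` of `X` is contractible in `X` if the inclusion `U ↪ X` is nullhomotopic. -/
def NullhomotopicIn (X : Type*) [TopologicalSpace X] (U : Set X) : Prop :=
  ∃ x₀ : X, (⟨Subtype.val, continuous_subtype_val⟩ : C(U, X)).Homotopic
    (ContinuousMap.const U x₀)

/-- `LSCatLE X n` : `X` can be covered by `n+1` open sets, each contractible in `X`. -/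
def LSCatLE (X : Type*) [TopologicalSpace X] (n : ℕ) : Prop :=
  ∃ U : Fin (n + 1) → Set X, (∀ i, IsOpen (U i)) ∧ (∀ i, NullhomotopicIn X (U i)) ∧
    (⋃ i, U i) = Set.univ

/-- The normalized Lusternik–Schnirelmann category of `X`, valued in `ℕ∞`
(`⊤` if no finite categorical cover exists). -/
noncomputable def lsCat (X : Type*) [TopologicalSpace X] : ℕ∞ :=
  ⨅ n ∈ {n : ℕ | LSCatLE X n}, (n : ℕ∞)


section Soft

variable {X Y : Type*} [TopologicalSpace X] [TopologicalSpace Y]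

/-- inclusion of a subset as a continuous map -/
def sincl (U : Set X) : C(U, X) := ⟨Subtype.val, continuous_subtype_val⟩

lemma nullhomotopicIn_iff (U : Set X) :
    NullhomotopicIn X U ↔ ∃ x₀ : X, (sincl U).Homotopic (ContinuousMap.const U x₀) := Iff.rfl

lemma NullhomotopicIn.mono {U V : Set X} (h : NullhomotopicIn X U) (hVU : V ⊆ U) :
    NullhomotopicIn X V := by
  obtain ⟨x₀, hH⟩ := h
  refine ⟨x₀, ?_⟩
  let e : C(V, U) := ⟨fun v => ⟨v.1, hVU v.2⟩, (continuous_subtype_val).subtype_mk _⟩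
  have key := hH.comp (ContinuousMap.Homotopic.refl e)
  have h1 : ((⟨Subtype.val, continuous_subtype_val⟩ : C(U, X)).comp e)
      = (⟨Subtype.val, continuous_subtype_val⟩ : C(V, X)) := by ext v; rfl
  have h2 : (ContinuousMap.const U x₀).comp e = ContinuousMap.const V x₀ := by ext v; rfl
  rwa [h1, h2] at key

lemma NullhomotopicIn.preimage (e : ContinuousMap.HomotopyEquiv X Y) {V : Set Y}
    (h : NullhomotopicIn Y V) : NullhomotopicIn X (e.toFun ⁻¹' V) := by
  obtain ⟨y₀, hH⟩ := h
  refine ⟨e.invFun y₀, ?_⟩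
  set U : Set X := e.toFun ⁻¹' V with hU
  let f' : C(U, V) := ⟨fun u => ⟨e.toFun u.1, u.2⟩,
    (e.toFun.continuous.comp continuous_subtype_val).subtype_mk _⟩
  have step1 : (sincl U).Homotopic ((e.invFun.comp e.toFun).comp (sincl U)) := by
    have key := e.left_inv.comp (ContinuousMap.Homotopic.refl (sincl U))
    have h1 : (ContinuousMap.id X).comp (sincl U) = sincl U := by ext; rfl
    rw [h1] at key
    exact key.symm
  have heq : (e.invFun.comp e.toFun).comp (sincl U) = (e.invFun.comp (sincl V)).comp f' := by
    ext u; rfl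
  have step2 : ((e.invFun.comp (sincl V)).comp f').Homotopic
      (ContinuousMap.const U (e.invFun y₀)) := by
    have key := ((ContinuousMap.Homotopic.refl e.invFun).comp
      hH).comp (ContinuousMap.Homotopic.refl f')
    have h2 : (e.invFun.comp (ContinuousMap.const V y₀)).comp f'
        = ContinuousMap.const U (e.invFun y₀) := by ext; rfl
    rwa [h2] at key
  exact (heq ▸ step1).trans step2

lemma LSCatLE.of_homotopyEquiv (e : ContinuousMap.HomotopyEquiv X Y) {n : ℕ}
    (h : LSCatLE Y n) : LSCatLE X n := by
  obtain ⟨V, hVo, hVn, hVc⟩ := h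
  refine ⟨fun i => e.toFun ⁻¹' (V i), fun i => (hVo i).preimage e.toFun.continuous,
    fun i => (hVn i).preimage e, ?_⟩
  rw [← Set.preimage_iUnion, hVc, Set.preimage_univ]

lemma LSCatLE.mono {m n : ℕ} (h : LSCatLE X m) (hmn : m ≤ n) : LSCatLE X n := by
  obtain ⟨U, hUo, hUn, hUc⟩ := h
  refine ⟨fun i => U ⟨min i.1 m, by omega⟩, fun _ => hUo _, fun _ => hUn _, ?_⟩
  apply Set.eq_univ_of_univ_subset
  rw [← hUc]
  refine Set.iUnion_subset fun i => ?_
  refine Set.subset_iUnion_of_subset ⟨i.1, by omega⟩ ?_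
  have : (⟨min i.1 m, by omega⟩ : Fin (m+1)) = i := by
    ext; simp; omega
  rw [this]

lemma lsCat_le_of_lSCatLE {n : ℕ} (h : LSCatLE X n) : lsCat X ≤ n := by
  exact iInf₂_le n h

lemma lSCatLE_of_lsCat_le {n : ℕ} (h : lsCat X ≤ n) : LSCatLE X n := by
  by_contra hc
  have hall : ∀ m ∈ {n : ℕ | LSCatLE X n}, ((n+1 : ℕ) : ℕ∞) ≤ (m : ℕ∞) := by
    intro m hm
    by_contra hlt
    push_neg at hlt
    have hmn : m ≤ n := by
      have := (Nat.cast_lt (α := ℕ∞)).mp hlt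
      omega
    exact hc (hm.mono hmn)
  have h2 : ((n+1 : ℕ) : ℕ∞) ≤ lsCat X := le_iInf₂ hall
  have := h2.trans h
  have := (Nat.cast_le (α := ℕ∞)).mp this
  omega

lemma lsCat_le_of_homotopyEquiv (e : ContinuousMap.HomotopyEquiv X Y) :
    lsCat X ≤ lsCat Y := by
  refine le_iInf₂ fun n hn => ?_
  exact lsCat_le_of_lSCatLE (LSCatLE.of_homotopyEquiv e hn)

lemma pathConnectedSpace_of_homotopyEquiv (e : ContinuousMap.HomotopyEquiv X Y)
    [PathConnectedSpace X] : PathConnectedSpace Y := by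
  have hX : Nonempty X := PathConnectedSpace.nonempty
  have hne : Nonempty Y := ⟨e.toFun (Classical.arbitrary X)⟩
  obtain ⟨H⟩ := e.right_inv
  have hp : ∀ y : Y, Path (e.toFun (e.invFun y)) y := fun y =>
    { toFun := fun t => H (t, y)
      continuous_toFun := H.continuous.comp (continuous_id.prodMk continuous_const)
      source' := H.apply_zero y
      target' := H.apply_one y }
  refine ⟨hne, fun x y => ?_⟩
  have pq : Path (e.invFun x) (e.invFun y) := PathConnectedSpace.somePath _ _
  exact ⟨((hp x).symm.trans (pq.map e.toFun.continuous)).trans (hp y)⟩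

end Soft

section Glue

open unitInterval

variable {X Y : Type*} [TopologicalSpace X] [TopologicalSpace Y]

lemma NullhomotopicIn.prodSet {U : Set X} {V : Set Y} (hU : NullhomotopicIn X U)
    (hV : NullhomotopicIn Y V) : NullhomotopicIn (X × Y) (U ×ˢ V) := by
  obtain ⟨x₀, ⟨H1⟩⟩ := hU
  obtain ⟨y₀, ⟨H2⟩⟩ := hV
  refine ⟨(x₀, y₀), ⟨{
    toFun := fun p => (H1 (p.1, ⟨p.2.1.1, p.2.2.1⟩), H2 (p.1, ⟨p.2.1.2, p.2.2.2⟩))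
    continuous_toFun := by
      refine Continuous.prodMk ?_ ?_
      · exact H1.continuous.comp (continuous_fst.prodMk
          (((continuous_fst.comp (continuous_subtype_val.comp continuous_snd))).subtype_mk _))
      · exact H2.continuous.comp (continuous_fst.prodMk
          (((continuous_snd.comp (continuous_subtype_val.comp continuous_snd))).subtype_mk _))
    map_zero_left := by intro w; simp [H1.apply_zero, H2.apply_zero]
    map_one_left := by intro w; simp [H1.apply_one, H2.apply_one] }⟩⟩

lemma nullhomotopicIn_iUnion [PathConnectedSpace X] {ι : Type*} (Ω : ι → Set X)
    (hop : ∀ a, IsOpen (Ω a)) (hdis : ∀ a b, a ≠ b → Ω a ∩ Ω b = ∅)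
    (hn : ∀ a, NullhomotopicIn X (Ω a)) : NullhomotopicIn X (⋃ a, Ω a) := by
  classical
  have hXne : Nonempty X := PathConnectedSpace.nonempty
  set xs : X := Classical.arbitrary X with hxs
  choose x₀ hH using hn
  have K : ∀ a, (⟨Subtype.val, continuous_subtype_val⟩ : C(Ω a, X)).Homotopy
      (ContinuousMap.const (Ω a) xs) := fun a =>
    (hH a).some.trans
      { toFun := fun p => (PathConnectedSpace.somePath (x₀ a) xs) p.1
        continuous_toFun := (PathConnectedSpace.somePath (x₀ a) xs).continuous.comp continuous_fst
        map_zero_left := by intro w; simp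
        map_one_left := by intro w; simp }
  set W : Set X := ⋃ a, Ω a with hW
  have mem : ∀ w : ↥W, ∃ a, w.1 ∈ Ω a := fun w => Set.mem_iUnion.mp w.2
  set H0 : I × ↥W → X := fun p => K (mem p.2).choose (p.1, ⟨p.2.1, (mem p.2).choose_spec⟩)
    with hH0
  have key : ∀ (a) (w : ↥W) (hw : w.1 ∈ Ω a) (t : I), H0 (t, w) = K a (t, ⟨w.1, hw⟩) := by
    intro a w hw t
    have hidx : (mem w).choose = a := by
      by_contra hne
      have : w.1 ∈ Ω (mem w).choose ∩ Ω a := ⟨(mem w).choose_spec, hw⟩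
      rw [hdis _ _ hne] at this
      exact this
    subst hidx
    rfl
  have hcont : Continuous H0 := by
    rw [continuous_iff_continuousAt]
    intro p
    set a := (mem p.2).choose with ha
    have hO : IsOpen {q : I × ↥W | q.2.1 ∈ Ω a} :=
      (hop a).preimage (continuous_subtype_val.comp continuous_snd)
    refine ContinuousOn.continuousAt ?_ (hO.mem_nhds (mem p.2).choose_spec)
    rw [continuousOn_iff_continuous_restrict]
    have heq : ({q : I × ↥W | q.2.1 ∈ Ω a}).domRestrict H0
        = fun q => K a (q.1.1, ⟨q.1.2.1, q.2⟩) := funext fun q => key a q.1.2 q.2 q.1.1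
    rw [heq]
    exact (K a).continuous.comp ((continuous_fst.comp continuous_subtype_val).prodMk
      ((continuous_subtype_val.comp (continuous_snd.comp continuous_subtype_val)).subtype_mk _))
  refine ⟨xs, ⟨{
    toFun := H0
    continuous_toFun := hcont
    map_zero_left := by
      intro w
      show H0 (0, w) = _
      rw [key (mem w).choose w (mem w).choose_spec 0]
      simpa using (K _).apply_zero _
    map_one_left := by
      intro w
      show H0 (1, w) = _
      rw [key (mem w).choose w (mem w).choose_spec 1]
      simpa using (K _).apply_one _ }⟩⟩

end Glue

section Product

variable {X Y : Type*} [TopologicalSpace X] [TopologicalSpace Y]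

/-- `X` admits Urysohn separation of disjoint closed sets. -/
def UrysohnSep (X : Type*) [TopologicalSpace X] : Prop :=
  ∀ C D : Set X, IsClosed C → IsClosed D → Disjoint C D →
    ∃ f : C(X, ℝ), (∀ x ∈ C, f x = 0) ∧ (∀ x ∈ D, f x = 1) ∧ ∀ x, f x ∈ Set.Icc (0:ℝ) 1

lemma pathConnectedSpace_prod [PathConnectedSpace X] [PathConnectedSpace Y] :
    PathConnectedSpace (X × Y) := by
  have hX : Nonempty X := PathConnectedSpace.nonempty
  have hY : Nonempty Y := PathConnectedSpace.nonempty
  refine ⟨⟨(Classical.arbitrary X, Classical.arbitrary Y)⟩, fun p q => ?_⟩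
  exact ⟨(PathConnectedSpace.somePath p.1 q.1).prod (PathConnectedSpace.somePath p.2 q.2)⟩

lemma exists_subordinate (hN : UrysohnSep X) {k : ℕ} (U : Fin (k+1) → Set X)
    (ho : ∀ i, IsOpen (U i)) (hcov : (⋃ i, U i) = Set.univ) :
    ∃ f : Fin (k+1) → C(X, ℝ), (∀ i x, 0 ≤ f i x) ∧ (∀ i x, f i x ≠ 0 → x ∈ U i) ∧
      ∀ x, ∃ i, 0 < f i x := by
  classical
  set T : ℕ → Prop := fun j => ∃ f : Fin (k+1) → C(X, ℝ),
    (∀ i x, 0 ≤ f i x) ∧ (∀ i x, f i x ≠ 0 → x ∈ U i) ∧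
    ∀ x, (∃ i : Fin (k+1), i.1 < j ∧ 1/2 < f i x) ∨ ∃ i : Fin (k+1), j ≤ i.1 ∧ x ∈ U i
    with hT
  have base : T 0 := by
    refine ⟨fun _ => ContinuousMap.const X 0, by simp, by simp, fun x => Or.inr ?_⟩
    have hx : x ∈ ⋃ i, U i := hcov ▸ Set.mem_univ x
    obtain ⟨i, hi⟩ := Set.mem_iUnion.mp hx
    exact ⟨i, Nat.zero_le _, hi⟩
  have step : ∀ j, j < k+1 → T j → T (j+1) := by
    rintro j hj ⟨f, hf0, hfs, hinv⟩
    set jj : Fin (k+1) := ⟨j, hj⟩ with hjj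
    set O : Set X := {x | (∃ i : Fin (k+1), i.1 < j ∧ 1/2 < f i x) ∨
      ∃ i : Fin (k+1), j+1 ≤ i.1 ∧ x ∈ U i} with hO
    have hOopen : IsOpen O := by
      have he : O = (⋃ i : Fin (k+1), {x | i.1 < j ∧ 1/2 < f i x}) ∪
          ⋃ i : Fin (k+1), {x | j+1 ≤ i.1 ∧ x ∈ U i} := by
        ext x; simp [hO, Set.mem_iUnion, Set.mem_union]
      rw [he]
      refine IsOpen.union (isOpen_iUnion fun i => ?_) (isOpen_iUnion fun i => ?_)
      · by_cases h : i.1 < j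
        · have : {x | i.1 < j ∧ 1/2 < f i x} = {x | 1/2 < f i x} := by ext; simp [h]
          rw [this]; exact isOpen_lt continuous_const (f i).continuous
        · have : {x | i.1 < j ∧ 1/2 < f i x} = ∅ := by ext; simp [h]
          rw [this]; exact isOpen_empty
      · by_cases h : j+1 ≤ i.1
        · have : {x | j+1 ≤ i.1 ∧ x ∈ U i} = U i := by ext; simp [h]
          rw [this]; exact ho i
        · have : {x | j+1 ≤ i.1 ∧ x ∈ U i} = ∅ := by ext; simp [h]
          rw [this]; exact isOpen_empty
    have hKU : Oᶜ ⊆ U jj := by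
      intro x hx
      rcases hinv x with ⟨i, hij, hfi⟩ | ⟨i, hij, hxU⟩
      · exact absurd (Or.inl ⟨i, hij, hfi⟩) hx
      · rcases Nat.lt_or_ge i.1 (j+1) with h1 | h1
        · have : i = jj := Fin.ext (by show i.1 = j; omega)
          rwa [← this]
        · exact absurd (Or.inr ⟨i, h1, hxU⟩) hx
    obtain ⟨g, hg0, hg1, hgI⟩ := hN (U jj)ᶜ Oᶜ (ho jj).isClosed_compl hOopen.isClosed_compl
      (Set.disjoint_left.mpr fun x hxc hxK => hxc (hKU hxK))
    refine ⟨Function.update f jj g, ?_, ?_, ?_⟩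
    · intro i x
      rcases eq_or_ne i jj with rfl | h
      · rw [Function.update_self]; exact (hgI x).1
      · rw [Function.update_of_ne h]; exact hf0 i x
    · intro i x
      rcases eq_or_ne i jj with rfl | h
      · rw [Function.update_self]
        intro hne
        by_contra hxU
        exact hne (hg0 x hxU)
      · rw [Function.update_of_ne h]; exact hfs i x
    · intro x
      by_cases hxK : x ∈ Oᶜ
      · refine Or.inl ⟨jj, by simp [hjj], ?_⟩
        rw [Function.update_self, hg1 x hxK]; norm_num
      · have hxO : x ∈ O := by simpa using hxK
        rcases hxO with ⟨i, hij, hfi⟩ | ⟨i, hij, hxU⟩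
        · refine Or.inl ⟨i, by omega, ?_⟩
          rwa [Function.update_of_ne (by intro h; rw [h] at hij; simp [hjj] at hij)]
        · exact Or.inr ⟨i, hij, hxU⟩
  have final : T (k+1) := by
    have hall : ∀ j, j ≤ k+1 → T j := by
      intro j
      induction j with
      | zero => exact fun _ => base
      | succ j ih => exact fun hj => step j (by omega) (ih (by omega))
    exact hall (k+1) le_rfl
  obtain ⟨f, h0, hs, hinv⟩ := final
  refine ⟨f, h0, hs, fun x => ?_⟩
  rcases hinv x with ⟨i, _, hfi⟩ | ⟨i, hij, _⟩
  · exact ⟨i, by linarith⟩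
  · exact absurd hij (by omega)

lemma exists_argmax_min {N : ℕ} (v : Fin (N+1) → ℝ) :
    ∃ i, (∀ i', v i' ≤ v i) ∧ ∀ i', i' < i → v i' < v i := by
  classical
  obtain ⟨i0, -, hi0⟩ := Finset.exists_max_image (Finset.univ : Finset (Fin (N+1))) v ⟨0, by simp⟩
  set A : Finset (Fin (N+1)) := Finset.univ.filter (fun i => ∀ i', v i' ≤ v i) with hA
  have hi0A : i0 ∈ A := by
    simp only [hA, Finset.mem_filter, Finset.mem_univ, true_and]
    exact fun i' => hi0 i' (Finset.mem_univ _)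
  have hAne : A.Nonempty := ⟨i0, hi0A⟩
  refine ⟨A.min' hAne, ?_, ?_⟩
  · have := A.min'_mem hAne
    simp only [hA, Finset.mem_filter, Finset.mem_univ, true_and] at this
    exact this
  · intro i' hi'
    have hmax := A.min'_mem hAne
    simp only [hA, Finset.mem_filter, Finset.mem_univ, true_and] at hmax
    rcases lt_or_eq_of_le (hmax i') with h | h
    · exact h
    · exfalso
      have hi'A : i' ∈ A := by
        simp only [hA, Finset.mem_filter, Finset.mem_univ, true_and]
        intro i''
        exact h ▸ hmax i''
      exact absurd (A.min'_le i' hi'A) (not_le.mpr hi')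

theorem lSCatLE_prod [PathConnectedSpace X] [PathConnectedSpace Y]
    (hNX : UrysohnSep X) (hNY : UrysohnSep Y) {m n : ℕ}
    (hX : LSCatLE X m) (hY : LSCatLE Y n) : LSCatLE (X × Y) (m + n) := by
  classical
  obtain ⟨U, hUo, hUn, hUc⟩ := hX
  obtain ⟨V, hVo, hVn, hVc⟩ := hY
  obtain ⟨f, hf0, hfs, hfpos⟩ := exists_subordinate hNX U hUo hUc
  obtain ⟨g, hg0, hgs, hgpos⟩ := exists_subordinate hNY V hVo hVc
  haveI : PathConnectedSpace (X × Y) := pathConnectedSpace_prod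
  set φ : Fin (m+1) → Fin (n+1) → (X × Y) → ℝ := fun i j z => f i z.1 * g j z.2 with hφ
  have hφc : ∀ i j, Continuous (φ i j) := fun i j =>
    ((f i).continuous.comp continuous_fst).mul ((g j).continuous.comp continuous_snd)
  set Ω : Fin (m+1) → Fin (n+1) → Set (X × Y) := fun i j =>
    {z | 0 < φ i j z ∧ ∀ i' j', i'.1 + j'.1 = i.1 + j.1 → i' ≠ i → φ i' j' z < φ i j z}
    with hΩ
  have hΩo : ∀ i j, IsOpen (Ω i j) := by
    intro i j
    have he : Ω i j = {z | 0 < φ i j z} ∩ ⋂ i', ⋂ j',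
        {z | i'.1 + j'.1 = i.1 + j.1 → i' ≠ i → φ i' j' z < φ i j z} := by
      ext z; simp [hΩ, Set.mem_iInter]
    rw [he]
    refine IsOpen.inter (isOpen_lt continuous_const (hφc i j)) ?_
    refine isOpen_iInter_of_finite fun i' => isOpen_iInter_of_finite fun j' => ?_
    by_cases h1 : i'.1 + j'.1 = i.1 + j.1
    · by_cases h2 : i' ≠ i
      · have : {z | i'.1 + j'.1 = i.1 + j.1 → i' ≠ i → φ i' j' z < φ i j z}
            = {z | φ i' j' z < φ i j z} := by ext; simp [h1, h2]
        rw [this]; exact isOpen_lt (hφc i' j') (hφc i j)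
      · have : {z | i'.1 + j'.1 = i.1 + j.1 → i' ≠ i → φ i' j' z < φ i j z} = Set.univ := by
          ext; simp [h2]
        rw [this]; exact isOpen_univ
    · have : {z | i'.1 + j'.1 = i.1 + j.1 → i' ≠ i → φ i' j' z < φ i j z} = Set.univ := by
        ext; simp [h1]
      rw [this]; exact isOpen_univ
  have hΩsub : ∀ i j, Ω i j ⊆ (U i) ×ˢ (V j) := by
    intro i j z hz
    have h1 : 0 < f i z.1 * g j z.2 := hz.1
    have hf : f i z.1 ≠ 0 := by
      intro h; rw [h, zero_mul] at h1; exact lt_irrefl 0 h1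
    have hg : g j z.2 ≠ 0 := by
      intro h; rw [h, mul_zero] at h1; exact lt_irrefl 0 h1
    exact ⟨hfs i z.1 hf, hgs j z.2 hg⟩
  refine ⟨fun r => ⋃ p : {p : Fin (m+1) × Fin (n+1) // p.1.1 + p.2.1 = r.1}, Ω p.1.1 p.1.2,
    ?_, ?_, ?_⟩
  · exact fun r => isOpen_iUnion fun p => hΩo _ _
  · intro r
    refine nullhomotopicIn_iUnion _ (fun p => hΩo _ _) ?_ ?_
    · rintro a b hab
      rw [Set.eq_empty_iff_forall_notMem]
      rintro z ⟨hza, hzb⟩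
      rcases eq_or_ne a.1.1 b.1.1 with he1 | hne1
      · have he2 : a.1.2 = b.1.2 := by
          have h1 := a.2; have h2 := b.2
          apply Fin.ext
          have : a.1.1.1 = b.1.1.1 := by rw [he1]
          omega
        exact hab (Subtype.ext (Prod.ext he1 he2))
      · have h1 := hza.2 b.1.1 b.1.2 (by have := a.2; have := b.2; omega)
          (by exact fun h => hne1 h.symm)
        have h2 := hzb.2 a.1.1 a.1.2 (by have := a.2; have := b.2; omega) hne1
        linarith
    · intro p
      exact ((hUn p.1.1).prodSet (hVn p.1.2)).mono (hΩsub p.1.1 p.1.2)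
  · apply Set.eq_univ_of_forall
    intro z
    obtain ⟨is, hisM, hismin⟩ := exists_argmax_min (fun i => f i z.1)
    obtain ⟨js, hjsM, hjsmin⟩ := exists_argmax_min (fun j => g j z.2)
    have ha : 0 < f is z.1 := by
      obtain ⟨i, hi⟩ := hfpos z.1
      exact lt_of_lt_of_le hi (hisM i)
    have hb : 0 < g js z.2 := by
      obtain ⟨j, hj⟩ := hgpos z.2
      exact lt_of_lt_of_le hj (hjsM j)
    have hmem : z ∈ Ω is js := by
      refine ⟨mul_pos ha hb, ?_⟩
      intro i' j' hlev hne
      have hvne : i'.1 ≠ is.1 := fun h => hne (Fin.ext h)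
      rcases Nat.lt_or_ge i'.1 is.1 with hlt | hge
      · have hf' : f i' z.1 < f is z.1 := hismin i' (by rwa [Fin.lt_def])
        calc f i' z.1 * g j' z.2 ≤ f i' z.1 * g js z.2 :=
              mul_le_mul_of_nonneg_left (hjsM j') (hf0 i' z.1)
          _ < f is z.1 * g js z.2 := mul_lt_mul_of_pos_right hf' hb
      · have hjlt : j'.1 < js.1 := by omega
        have hg' : g j' z.2 < g js z.2 := hjsmin j' (by rwa [Fin.lt_def])
        calc f i' z.1 * g j' z.2 ≤ f is z.1 * g j' z.2 :=
              mul_le_mul_of_nonneg_right (hisM i') (hg0 j' z.2)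
          _ < f is z.1 * g js z.2 := mul_lt_mul_of_pos_left hg' ha
    have hr : is.1 + js.1 < m + n + 1 := by
      have := is.2; have := js.2; omega
    refine Set.mem_iUnion.mpr ⟨⟨is.1 + js.1, hr⟩, ?_⟩
    exact Set.mem_iUnion.mpr ⟨⟨(is, js), rfl⟩, hmem⟩

end Product

section CWUry

open CategoryTheory TopCat CategoryTheory.Limits

lemma continuousOn_union_closed {α β : Type*} [TopologicalSpace α] [TopologicalSpace β]
    {f : α → β} {s t : Set α} (hs : IsClosed s) (ht : IsClosed t)
    (hfs : ContinuousOn f s) (hft : ContinuousOn f t) : ContinuousOn f (s ∪ t) := by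
  intro x hx
  rw [continuousWithinAt_union]
  constructor
  · by_cases hxs : x ∈ s
    · exact hfs x hxs
    · exact continuousWithinAt_of_notMem_closure (by rwa [hs.closure_eq])
  · by_cases hxt : x ∈ t
    · exact hft x hxt
    · exact continuousWithinAt_of_notMem_closure (by rwa [ht.closure_eq])

noncomputable def clampCM : C(ℝ, ℝ) := ⟨fun t => max 0 (min 1 t), continuous_const.max (continuous_const.min continuous_id)⟩

lemma clampCM_mem (t : ℝ) : clampCM t ∈ Set.Icc (0:ℝ) 1 :=
  ⟨le_max_left _ _, max_le (by norm_num) (min_le_left _ _)⟩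

lemma clampCM_of_mem {t : ℝ} (h : t ∈ Set.Icc (0:ℝ) 1) : clampCM t = t := by
  have h1 : min 1 t = t := min_eq_right h.2
  show max 0 (min 1 t) = t
  rw [h1]
  exact max_eq_right h.1

lemma extend_glue {S T : Type*} [TopologicalSpace S] [TopologicalSpace T] [NormalSpace T]
    (e : S → T) (he : Topology.IsClosedEmbedding e)
    (φ : C(S, ℝ)) (hφI : ∀ s, φ s ∈ Set.Icc (0:ℝ) 1)
    (Cd Dd : Set T) (hCc : IsClosed Cd) (hDc : IsClosed Dd) (hdisj : Disjoint Cd Dd)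
    (hφC : ∀ s, e s ∈ Cd → φ s = 0) (hφD : ∀ s, e s ∈ Dd → φ s = 1) :
    ∃ h : C(T, ℝ), (∀ s, h (e s) = φ s) ∧ (∀ x ∈ Cd, h x = 0) ∧ (∀ x ∈ Dd, h x = 1) ∧
      ∀ x, h x ∈ Set.Icc (0:ℝ) 1 := by
  classical
  obtain ⟨ψ₀, hψ₀⟩ := ContinuousMap.exists_extension he φ
  set ψ : C(T, ℝ) := clampCM.comp ψ₀ with hψ
  have hψe : ∀ s, ψ (e s) = φ s := by
    intro s
    have h1 : ψ₀ (e s) = φ s := DFunLike.congr_fun hψ₀ s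
    show clampCM (ψ₀ (e s)) = φ s
    rw [h1]
    exact clampCM_of_mem (hφI s)
  set K := (Set.range e ∪ Cd) ∪ Dd with hK
  have hKc : IsClosed K := (he.isClosed_range.union hCc).union hDc
  set γ : T → ℝ := fun x => if x ∈ Cd then 0 else if x ∈ Dd then 1 else ψ x with hγ
  have hγe : ∀ s, γ (e s) = φ s := by
    intro s
    by_cases hc : e s ∈ Cd
    · simp only [hγ, if_pos hc]; exact (hφC s hc).symm
    · by_cases hd : e s ∈ Dd
      · simp only [hγ, if_neg hc, if_pos hd]; exact (hφD s hd).symm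
      · simp only [hγ, if_neg hc, if_neg hd]; exact hψe s
  have hγC : ∀ x ∈ Cd, γ x = 0 := fun x hx => by simp only [hγ, if_pos hx]
  have hγD : ∀ x ∈ Dd, γ x = 1 := fun x hx => by
    have hc : x ∉ Cd := fun hxc => (Set.disjoint_left.mp hdisj hxc) hx
    simp only [hγ, if_neg hc, if_pos hx]
  have hγI : ∀ x ∈ K, γ x ∈ Set.Icc (0:ℝ) 1 := by
    intro x _
    by_cases hc : x ∈ Cd
    · rw [hγC x hc]; norm_num
    · by_cases hd : x ∈ Dd
      · rw [hγD x hd]; norm_num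
      · simp only [hγ, if_neg hc, if_neg hd]; exact clampCM_mem _
  have hγK : ContinuousOn γ K := by
    have h1 : ContinuousOn γ (Set.range e) := by
      refine (ψ.continuous.continuousOn).congr ?_
      rintro x ⟨s, rfl⟩
      rw [hγe s, hψe s]
    have h2 : ContinuousOn γ Cd := continuousOn_const.congr fun x hx => hγC x hx
    have h3 : ContinuousOn γ Dd := continuousOn_const.congr fun x hx => hγD x hx
    exact continuousOn_union_closed (he.isClosed_range.union hCc) hDc
      (continuousOn_union_closed he.isClosed_range hCc h1 h2) h3
  obtain ⟨h₀, hh₀⟩ := ContinuousMap.exists_restrict_eq (s := K) hKc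
    ⟨K.restrict γ, continuousOn_iff_continuous_restrict.mp hγK⟩
  have hKval : ∀ x (hx : x ∈ K), h₀ x = γ x := by
    intro x hx
    exact DFunLike.congr_fun hh₀ (⟨x, hx⟩ : K)
  refine ⟨clampCM.comp h₀, ?_, ?_, ?_, ?_⟩
  · intro s
    have hm : e s ∈ K := Or.inl (Or.inl ⟨s, rfl⟩)
    show clampCM (h₀ (e s)) = φ s
    rw [hKval _ hm, hγe s]
    exact clampCM_of_mem (hφI s)
  · intro x hx
    show clampCM (h₀ x) = 0
    rw [hKval _ (Or.inl (Or.inr hx)), hγC x hx]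
    show max 0 (min 1 0) = 0
    norm_num
  · intro x hx
    show clampCM (h₀ x) = 1
    rw [hKval _ (Or.inr hx), hγD x hx]
    show max 0 (min 1 1) = 1
    norm_num
  · intro x
    exact clampCM_mem _

lemma topcat_pushout_cases {A B Z : TopCat.{0}} (f : Z ⟶ A) (g : Z ⟶ B) (p : ↑(pushout f g)) :
    (∃ a, pushout.inl f g a = p) ∨ ∃ b, pushout.inr f g b = p := by
  obtain ⟨j, y, hy⟩ := Concrete.colimit_exists_rep (span f g) p
  cases j with
  | none =>
    left
    refine ⟨f y, ?_⟩
    have hw := colimit.w (span f g) WalkingSpan.Hom.fst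
    calc pushout.inl f g (f y)
        = ((span f g).map WalkingSpan.Hom.fst ≫ colimit.ι (span f g) WalkingSpan.left) y := by
          rw [span_map_fst]; rfl
      _ = colimit.ι (span f g) WalkingSpan.zero y := by rw [hw]
      _ = p := hy
  | some j' =>
    cases j' with
    | left => exact Or.inl ⟨y, hy⟩
    | right => exact Or.inr ⟨y, hy⟩

lemma topcat_sigma_cases {ι : Type} (Ds : ι → TopCat.{0}) (y : ↑(∐ Ds)) :
    ∃ d z, (Sigma.ι Ds d) z = y := by
  obtain ⟨⟨d⟩, z, hz⟩ := Concrete.colimit_exists_rep (Discrete.functor Ds) y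
  exact ⟨d, z, hz⟩

end CWUry

section CWMain

open CategoryTheory TopCat CategoryTheory.Limits

theorem cw_urysohnSep (Yt : TopCat.{0}) (c : TopCat.CWComplex Yt) :
    UrysohnSep ↑Yt := by
  classical
  intro C D hC hD hCD
  let F := c.F
  let ι : ∀ n : ℕ, F.obj n ⟶ Yt := fun n => c.incl.app n
  have h0 : IsEmpty ↑(F.obj 0) :=
    ⟨fun x => PEmpty.elim (initial.to (TopCat.of PEmpty.{1}) (c.isoBot.hom x))⟩
  set P : ∀ n : ℕ, (F.obj n ⟶ TopCat.of ℝ) → Prop := fun n f =>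
    (∀ x, ι n x ∈ C → f x = (0:ℝ)) ∧ (∀ x, ι n x ∈ D → f x = (1:ℝ)) ∧
      ∀ x, f x ∈ Set.Icc (0:ℝ) 1
    with hP
  have base : ∃ f₀, P 0 f₀ :=
    ⟨TopCat.ofHom (ContinuousMap.const _ 0), fun x => h0.elim x, fun x => h0.elim x,
      fun x => h0.elim x⟩
  have hstep : ∀ n (f : F.obj n ⟶ TopCat.of ℝ), P n f →
      ∃ f', P (Order.succ n) f' ∧ F.map (homOfLE (Order.le_succ n)) ≫ f' = f := by
    intro n f hf
    let att := c.attachCells n (not_isMax n)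
    have hιp : ∀ y, ι (Order.succ n) (F.map (homOfLE (Order.le_succ n)) y) = ι n y := fun y =>
      ConcreteCategory.congr_hom ((c.incl.naturality (homOfLE (Order.le_succ n))).trans
        (Category.comp_id _)) y
    haveI : NormalSpace ↑(𝔻 n) := by
      show NormalSpace (ULift (Metric.closedBall (0 : EuclideanSpace ℝ (Fin n)) 1))
      infer_instance
    haveI : T2Space ↑(𝔻 n) := by
      show T2Space (ULift (Metric.closedBall (0 : EuclideanSpace ℝ (Fin n)) 1))
      infer_instance
    have hemb : Topology.IsClosedEmbedding ⇑(diskBoundaryInclusion n) :=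
      Continuous.isClosedEmbedding (diskBoundaryInclusion n).hom.continuous
        ((TopCat.mono_iff_injective _).mp inferInstance)
    have hsq : ∀ k s, att.cell k (diskBoundaryInclusion n s) =
        F.map (homOfLE (Order.le_succ n)) (att.g₁ (att.cofan₁.inj k s)) := by
      intro k s
      have h1 : diskBoundaryInclusion n ≫ att.cell k =
          att.cofan₁.inj k ≫ att.g₁ ≫ F.map (homOfLE (Order.le_succ n)) := by
        rw [att.cell_def k, att.isPushout.w, ← Category.assoc, ← Category.assoc, att.hm k]
      exact ConcreteCategory.congr_hom h1 s
    have hext : ∀ k : att.ι, ∃ h : C(↑(𝔻 n), ℝ),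
        (∀ s, h (diskBoundaryInclusion n s) = f (att.g₁ (att.cofan₁.inj k s))) ∧
        (∀ x, ι (Order.succ n) (att.cell k x) ∈ C → h x = 0) ∧
        (∀ x, ι (Order.succ n) (att.cell k x) ∈ D → h x = 1) ∧
        ∀ x, h x ∈ Set.Icc (0:ℝ) 1 := by
      intro k
      have hcont : Continuous fun x : ↑(𝔻 n) => ι (Order.succ n) (att.cell k x) :=
        (ι (Order.succ n)).hom.continuous.comp (att.cell k).hom.continuous
      exact extend_glue ⇑(diskBoundaryInclusion n) hemb (att.cofan₁.inj k ≫ att.g₁ ≫ f).hom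
        (fun s => hf.2.2 _) _ _ (hC.preimage hcont) (hD.preimage hcont)
        (Set.disjoint_left.mpr fun x hx1 hx2 => Set.disjoint_left.mp hCD hx1 hx2)
        (fun s hs => by
          have hmem : ι (Order.succ n) (att.cell k (diskBoundaryInclusion n s)) ∈ C := hs
          rw [hsq, hιp] at hmem
          exact hf.1 _ hmem)
        (fun s hs => by
          have hmem : ι (Order.succ n) (att.cell k (diskBoundaryInclusion n s)) ∈ D := hs
          rw [hsq, hιp] at hmem
          exact hf.2.1 _ hmem)
    choose hd hdbd hdC hdD hdI using hext
    let σ : att.cofan₂.pt ⟶ TopCat.of ℝ :=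
      Cofan.IsColimit.desc att.isColimit₂ (fun k => TopCat.ofHom (hd k))
    have hσ : ∀ k, att.cofan₂.inj k ≫ σ = TopCat.ofHom (hd k) := fun k =>
      Cofan.IsColimit.fac _ _ k
    have hw : att.g₁ ≫ f = att.m ≫ σ := by
      refine Cofan.IsColimit.hom_ext att.isColimit₁ _ _ (fun k => ?_)
      rw [att.hm_assoc k, hσ]
      ext s
      exact (hdbd k s).symm
    let f' : F.obj (Order.succ n) ⟶ TopCat.of ℝ := att.isPushout.desc f σ hw
    have hcompat : F.map (homOfLE (Order.le_succ n)) ≫ f' = f := att.isPushout.inl_desc _ _ _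
    have hcell : ∀ k y, f' (att.cell k y) = hd k y := by
      intro k y
      have h1 : att.cell k ≫ f' = TopCat.ofHom (hd k) := by
        rw [att.cell_def, Category.assoc, IsPushout.inr_desc, hσ]
      exact ConcreteCategory.congr_hom h1 y
    have happ1 : ∀ a, f' (F.map (homOfLE (Order.le_succ n)) a) = f a := fun a =>
      ConcreteCategory.congr_hom hcompat a
    have hcases : ∀ x : ↑(F.obj (Order.succ n)),
        (∃ a, F.map (homOfLE (Order.le_succ n)) a = x) ∨ ∃ k y, att.cell k y = x := by
      intro x
      obtain ⟨j, y, hy⟩ := Concrete.isColimit_exists_rep _ att.isPushout.isColimit x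
      cases j with
      | none => exact Or.inl ⟨att.g₁ y, hy⟩
      | some j' =>
        cases j' with
        | left => exact Or.inl ⟨y, hy⟩
        | right =>
          right
          obtain ⟨⟨k⟩, z, hz⟩ := Concrete.isColimit_exists_rep _ att.isColimit₂ y
          subst hz
          exact ⟨k, z, hy⟩
    refine ⟨f', ⟨?_, ?_, ?_⟩, hcompat⟩
    · intro x hx
      rcases hcases x with ⟨a, rfl⟩ | ⟨k, y, rfl⟩
      · rw [happ1]
        exact hf.1 a (by rwa [← hιp a])
      · rw [hcell]
        exact hdC k y hx
    · intro x hx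
      rcases hcases x with ⟨a, rfl⟩ | ⟨k, y, rfl⟩
      · rw [happ1]
        exact hf.2.1 a (by rwa [← hιp a])
      · rw [hcell]
        exact hdD k y hx
    · intro x
      rcases hcases x with ⟨a, rfl⟩ | ⟨k, y, rfl⟩
      · rw [happ1]; exact hf.2.2 a
      · rw [hcell]; exact hdI k y
  -- recursion along the skeleta
  let Fn : ∀ n : ℕ, {f : F.obj n ⟶ TopCat.of ℝ // P n f} := fun n =>
    Nat.rec (motive := fun n => {f : F.obj n ⟶ TopCat.of ℝ // P n f})
      ⟨base.choose, base.choose_spec⟩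
      (fun n prev => ⟨(hstep n prev.1 prev.2).choose, (hstep n prev.1 prev.2).choose_spec.1⟩) n
  have hFc : ∀ n, F.map (homOfLE (Order.le_succ n)) ≫ (Fn (n+1)).1 = (Fn n).1 := fun n =>
    (hstep n (Fn n).1 (Fn n).2).choose_spec.2
  let coc : Cocone F :=
    { pt := TopCat.of ℝ
      ι := NatTrans.ofSequence (F := F) (G := (Functor.const ℕ).obj (TopCat.of ℝ))
        (fun n => (Fn n).1) (by
          intro n
          simp only [Functor.const_obj_map, Category.comp_id]
          exact hFc n) }
  let G : Yt ⟶ TopCat.of ℝ := c.isColimit.desc coc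
  have hGι : ∀ n, ι n ≫ G = (Fn n).1 := fun n => c.isColimit.fac coc n
  have happG : ∀ n y, G (ι n y) = (Fn n).1 y := fun n y =>
    CategoryTheory.ConcreteCategory.congr_hom (hGι n) y
  refine ⟨G.hom, ?_, ?_, ?_⟩
  · intro x hx
    obtain ⟨n, y, rfl⟩ := Concrete.isColimit_exists_rep _ c.isColimit x
    exact (happG n y).trans ((Fn n).2.1 y hx)
  · intro x hx
    obtain ⟨n, y, rfl⟩ := Concrete.isColimit_exists_rep _ c.isColimit x
    exact (happG n y).trans ((Fn n).2.2.1 y hx)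
  · intro x
    obtain ⟨n, y, rfl⟩ := Concrete.isColimit_exists_rep _ c.isColimit x
    have := (Fn n).2.2.2 y
    rw [← happG n y] at this
    exact this

end CWMain

/-- `X` has the homotopy type of a CW-complex. -/
def HasCWHomotopyType (X : Type*) [TopologicalSpace X] : Prop :=
  ∃ (Y : TopCat.{0}) (_ : TopCat.CWComplex Y), Nonempty (ContinuousMap.HomotopyEquiv X Y)

/-- Product formula for Lusternik–Schnirelmann category: for path-connected spaces `A`, `B`
having the homotopy type of CW-complexes, `cat(A × B) ≤ cat(A) + cat(B)`. -/
theorem stmt3 (A B : Type) [TopologicalSpace A] [TopologicalSpace B]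
    [PathConnectedSpace A] [PathConnectedSpace B]
    (hA : HasCWHomotopyType A) (hB : HasCWHomotopyType B) :
    lsCat (A × B) ≤ lsCat A + lsCat B := by
  obtain ⟨YA, cA, ⟨eA⟩⟩ := hA
  obtain ⟨YB, cB, ⟨eB⟩⟩ := hB
  haveI hPA : PathConnectedSpace ↑YA :=
    pathConnectedSpace_of_homotopyEquiv eA
  haveI hPB : PathConnectedSpace ↑YB :=
    pathConnectedSpace_of_homotopyEquiv eB
  by_cases ha : lsCat A = ⊤
  · rw [ha, top_add]; exact le_top
  by_cases hb : lsCat B = ⊤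
  · rw [hb, add_top]; exact le_top
  obtain ⟨m, hm⟩ := WithTop.ne_top_iff_exists.mp ha
  obtain ⟨n, hn⟩ := WithTop.ne_top_iff_exists.mp hb
  have hLA : LSCatLE A m := lSCatLE_of_lsCat_le (le_of_eq hm.symm)
  have hLB : LSCatLE B n := lSCatLE_of_lsCat_le (le_of_eq hn.symm)
  have hTA : LSCatLE ↑YA m :=
    LSCatLE.of_homotopyEquiv eA.symm hLA
  have hTB : LSCatLE ↑YB n :=
    LSCatLE.of_homotopyEquiv eB.symm hLB
  have hUA : UrysohnSep ↑YA :=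
    cw_urysohnSep YA cA
  have hUB : UrysohnSep ↑YB :=
    cw_urysohnSep YB cB
  have hprod := lSCatLE_prod hUA hUB hTA hTB
  have hAB : LSCatLE (A × B) (m + n) :=
    LSCatLE.of_homotopyEquiv (eA.prodCongr eB) hprod
  calc lsCat (A × B) ≤ ((m + n : ℕ) : ℕ∞) := lsCat_le_of_lSCatLE hAB
    _ = lsCat A + lsCat B := by rw [← hm, ← hn, Nat.cast_add]; rfl
end

section
/- If a pointed map j: A → B admits a left homotopy inverse and k: C → D admits a left homotopy inverse, then the join j ∗ k: A ∗ C → B ∗ D admits a left homotopy inverse. -/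
/-- The relation defining the topological join `X ∗ Y` as a quotient of `X × I × Y`. -/
def joinRel (X Y : Type*) : (X × unitInterval × Y) → (X × unitInterval × Y) → Prop :=
  fun p q => (p.2.1 = 0 ∧ q.2.1 = 0 ∧ p.1 = q.1) ∨ (p.2.1 = 1 ∧ q.2.1 = 1 ∧ p.2.2 = q.2.2)

/-- The topological join `X ∗ Y`. -/
def Join (X Y : Type*) [TopologicalSpace X] [TopologicalSpace Y] : Type _ :=
  Quot (joinRel X Y)

instance (X Y : Type*) [TopologicalSpace X] [TopologicalSpace Y] :
    TopologicalSpace (Join X Y) := instTopologicalSpaceQuot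

/-- The map induced on joins by a pair of continuous maps. -/
noncomputable def Join.map {A B C D : Type*} [TopologicalSpace A] [TopologicalSpace B]
    [TopologicalSpace C] [TopologicalSpace D] (j : C(A, B)) (k : C(C, D)) :
    C(Join A C, Join B D) where
  toFun := Quot.map (fun p => (j p.1, p.2.1, k p.2.2))
    (by rintro p q (⟨h0, h0', h⟩ | ⟨h1, h1', h⟩)
        · exact Or.inl ⟨h0, h0', by simp [h]⟩
        · exact Or.inr ⟨h1, h1', by simp [h]⟩)
  continuous_toFun := by
    apply continuous_quot_lift
    exact (continuous_quot_mk.comp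
      ((j.continuous.comp continuous_fst).prodMk
        ((continuous_fst.comp continuous_snd).prodMk
          (k.continuous.comp (continuous_snd.comp continuous_snd)))))

/-- `f` has a left homotopy inverse. -/
def HasLeftHomotopyInverse {X Y : Type*} [TopologicalSpace X] [TopologicalSpace Y]
    (f : C(X, Y)) : Prop :=
  ∃ g : C(Y, X), (g.comp f).Homotopic (ContinuousMap.id X)

noncomputable def joinHomotopy {A B C D : Type*} [TopologicalSpace A] [TopologicalSpace B]
    [TopologicalSpace C] [TopologicalSpace D] {f₀ f₁ : C(A, B)} {g₀ g₁ : C(C, D)}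
    (F : f₀.Homotopy f₁) (G : g₀.Homotopy g₁) :
    (Join.map f₀ g₀).Homotopy (Join.map f₁ g₁) := by
  classical
  -- the total map on the product, before quotienting
  set Φ : C((A × unitInterval × C) × unitInterval, Join B D) :=
    ⟨fun q => Quot.mk _ (F (q.2, q.1.1), q.1.2.1, G (q.2, q.1.2.2)), by
      apply continuous_quot_mk.comp
      refine Continuous.prodMk ?_ (Continuous.prodMk ?_ ?_)
      · exact F.continuous.comp (continuous_snd.prodMk (continuous_fst.comp continuous_fst))
      · exact (continuous_fst.comp continuous_snd).comp continuous_fst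
      · exact G.continuous.comp
          (continuous_snd.prodMk ((continuous_snd.comp continuous_snd).comp continuous_fst))⟩
      with hΦ
  have hwd : ∀ p q, joinRel A C p q → Φ.curry p = Φ.curry q := by
    rintro p q (⟨h0, h0', h⟩ | ⟨h1, h1', h⟩) <;> ext t
    · exact Quot.sound (Or.inl ⟨h0, h0', by simp [hΦ, h]⟩)
    · exact Quot.sound (Or.inr ⟨h1, h1', by simp [hΦ, h]⟩)
  set Ψ : C(Join A C, C(unitInterval, Join B D)) :=
    ⟨Quot.lift (fun p => Φ.curry p) hwd, continuous_quot_lift _ Φ.curry.continuous⟩ with hΨ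
  refine ⟨⟨fun p => Ψ p.2 p.1, ?_⟩, ?_, ?_⟩
  · exact Ψ.uncurry.continuous.comp (continuous_snd.prodMk continuous_fst)
  · intro x
    induction x using Quot.ind with
    | _ p =>
      show Quot.mk _ (F (0, p.1), p.2.1, G (0, p.2.2)) = Quot.mk _ (f₀ p.1, p.2.1, g₀ p.2.2)
      simp
  · intro x
    induction x using Quot.ind with
    | _ p =>
      show Quot.mk _ (F (1, p.1), p.2.1, G (1, p.2.2)) = Quot.mk _ (f₁ p.1, p.2.1, g₁ p.2.2)
      simp

theorem Join.map_comp {A B C D E F : Type*} [TopologicalSpace A] [TopologicalSpace B]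
    [TopologicalSpace C] [TopologicalSpace D] [TopologicalSpace E] [TopologicalSpace F]
    (j : C(A, B)) (j' : C(B, C)) (k : C(D, E)) (k' : C(E, F)) :
    (Join.map j' k').comp (Join.map j k) = Join.map (j'.comp j) (k'.comp k) := by
  ext x
  induction x using Quot.ind with
  | _ p => rfl

theorem Join.map_id {A C : Type*} [TopologicalSpace A] [TopologicalSpace C] :
    Join.map (ContinuousMap.id A) (ContinuousMap.id C) = ContinuousMap.id (Join A C) := by
  ext x
  induction x using Quot.ind with
  | _ p => rfl

/-- If `j : A → B` and `k : C → D` admit left homotopy inverses, then so does the induced map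
`j ∗ k : A ∗ C → B ∗ D` of topological joins. -/
theorem stmt19 {A B C D : Type*} [TopologicalSpace A] [TopologicalSpace B]
    [TopologicalSpace C] [TopologicalSpace D] (j : C(A, B)) (k : C(C, D))
    (hj : HasLeftHomotopyInverse j) (hk : HasLeftHomotopyInverse k) :
    HasLeftHomotopyInverse (Join.map j k) := by
  obtain ⟨g, ⟨F⟩⟩ := hj
  obtain ⟨h, ⟨G⟩⟩ := hk
  refine ⟨Join.map g h, ?_⟩
  rw [Join.map_comp]
  exact ⟨(joinHomotopy F G).trans (ContinuousMap.Homotopy.refl _ |>.cast rfl Join.map_id)⟩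
end
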